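/- Let Φ_α(x,y) = (φ_α(x), 1/(d_α(x) + sign(x)·y)) be the natural extension of the α-odd-continued-fraction Gauss map. Then for every irrational x ∈ I_α and every n ≥ 0, Φ_α^n(x, 0) = (φ_α^n(x), q_{n−1}(x;α)/q_n(x;α)). In particular q_n(x;α) > 0 for all n ≥ 1. -/

import Mathlib

/-- The digit function of the α-OCF Gauss map. -/
noncomputable def dA (α x : ℝ) : ℤ := 2 * ⌊1/(2*|x|) + (1-α)/2⌋ + 1

/-- The α-OCF Gauss map φ_α(x) = 1/|x| − d_α(x). -/
noncomputable def phiA (α : ℝ) (x : ℝ) : ℝ := 1/|x| - dA α x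

/-- Two-step linear recursion r 0 = a, r 1 = b, r (n+2) = c n * r (n+1) + s n * r n. -/
noncomputable def rec2 (a b : ℝ) (c s : ℕ → ℝ) : ℕ → ℝ
  | 0 => a
  | 1 => b
  | (n+2) => c n * rec2 a b c s (n+1) + s n * rec2 a b c s n

/-- Shifted convergent numerators of the α-OCF expansion of x: `Pc α x n = p_{n-1}(x;α)`. -/
noncomputable def Pc (α x : ℝ) : ℕ → ℝ :=
  rec2 1 0 (fun i => (dA α ((phiA α)^[i] x) : ℝ)) (fun i => Real.sign ((phiA α)^[i] x))

/-- Shifted convergent denominators of the α-OCF expansion of x: `Qc α x n = q_{n-1}(x;α)`. -/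
noncomputable def Qc (α x : ℝ) : ℕ → ℝ :=
  rec2 0 1 (fun i => (dA α ((phiA α)^[i] x) : ℝ)) (fun i => Real.sign ((phiA α)^[i] x))

/-- The natural extension Φ_α(x,y) = (φ_α(x), 1/(d_α(x) + sign(x)·y)). -/
noncomputable def PhiA (α : ℝ) (p : ℝ × ℝ) : ℝ × ℝ :=
  (phiA α p.1, 1/((dA α p.1 : ℝ) + Real.sign p.1 * p.2))

lemma sqrt5_sq : Real.sqrt 5 ^ 2 = 5 := Real.sq_sqrt (by norm_num)

lemma two_lt_sqrt5 : 2 < Real.sqrt 5 := by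
  nlinarith [Real.sqrt_nonneg 5, sqrt5_sq]

lemma sqrt5_lt_3 : Real.sqrt 5 < 3 := by
  nlinarith [Real.sqrt_nonneg 5, sqrt5_sq]

lemma one_le_dA {α x : ℝ} (hα2 : α ≤ (Real.sqrt 5 + 1)/2)
    (hx0 : x ≠ 0) (hx1 : α - 2 ≤ x) (hx2 : x < α) : 1 ≤ dA α x := by
  have hax : 0 < |x| := abs_pos.mpr hx0
  have h5 := sqrt5_sq
  have hs2 := two_lt_sqrt5
  have hxle : |x| * (α - 1) ≤ 1 := by
    rcases le_or_gt α 1 with h | h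
    · nlinarith [hax]
    · rcases abs_cases x with ⟨he, _⟩ | ⟨he, hneg⟩
      · nlinarith
      · nlinarith
  have hu : (0:ℝ) ≤ 1/(2*|x|) + (1-α)/2 := by
    rcases le_or_gt α 1 with h | h
    · have h1 : 0 < 1/(2*|x|) := by positivity
      linarith
    · have h1 : (α-1)/2 ≤ 1/(2*|x|) := by
        rw [div_le_div_iff₀ (by norm_num) (by positivity)]
        nlinarith
      linarith
  have h0 : (0:ℤ) ≤ ⌊1/(2*|x|) + (1-α)/2⌋ := Int.le_floor.mpr (by exact_mod_cast hu)
  unfold dA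
  omega

lemma three_le_dA_iff {α x : ℝ} (hx0 : x ≠ 0) : 3 ≤ dA α x ↔ 1 + α ≤ 1/|x| := by
  have hax : 0 < |x| := abs_pos.mpr hx0
  have e : 1/(2*|x|) = 1/|x|/2 := by rw [div_div, mul_comm]
  unfold dA
  rw [show ((3:ℤ) ≤ 2*⌊1/(2*|x|) + (1-α)/2⌋ + 1 ↔ 1 ≤ ⌊1/(2*|x|) + (1-α)/2⌋) by omega,
    Int.le_floor]
  push_cast
  rw [e]
  constructor <;> intro h <;> linarith

lemma phiA_eq (α x : ℝ) (hx0 : x ≠ 0) :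
    phiA α x = 2*Int.fract (1/(2*|x|) + (1-α)/2) + α - 2 := by
  have hax : 0 < |x| := abs_pos.mpr hx0
  unfold phiA dA Int.fract
  push_cast
  field_simp
  ring

lemma phiA_mem {α x : ℝ} (hx0 : x ≠ 0) : α - 2 ≤ phiA α x ∧ phiA α x < α := by
  rw [phiA_eq α x hx0]
  have h1 := Int.fract_nonneg (1/(2*|x|) + (1-α)/2)
  have h2 := Int.fract_lt_one (1/(2*|x|) + (1-α)/2)
  constructor <;> linarith

lemma phiA_irr {α x : ℝ} (hx : Irrational x) : Irrational (phiA α x) := by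
  have h1 : Irrational |x| := by
    rcases abs_cases x with ⟨h, _⟩ | ⟨h, _⟩
    · rwa [h]
    · rw [h]; exact hx.neg
  have h2 : Irrational (1/|x|) := by
    rw [one_div]; exact h1.inv
  exact h2.sub_intCast _

/-- The d = 1 case of the invariant propagation. -/
lemma d_one_case {α x : ℝ} (hxa2 : |x| ≤ (1 + Real.sqrt 5)/2)
    (hx0 : x ≠ 0) (hd : dA α x = 1) (hneg : phiA α x < 0) :
    (3 + Real.sqrt 5)/2 ≤ 1/|phiA α x| := by
  have h5 := sqrt5_sq
  have hs2 := two_lt_sqrt5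
  have hax : (0:ℝ) < |x| := abs_pos.mpr hx0
  have hphi : phiA α x = 1/|x| - 1 := by
    unfold phiA; rw [hd]; norm_num
  have habs : |phiA α x| = 1 - 1/|x| := by
    rw [abs_of_neg hneg, hphi]; ring
  have h1 : 0 < 1 - 1/|x| := by rw [hphi] at hneg; linarith
  rw [habs, le_div_iff₀ h1]
  have h2 : 1/|x| * |x| = 1 := by field_simp
  have hb : 0 < 1/|x| := by positivity
  have h3 : 1 ≤ (1 + Real.sqrt 5)/2 * (1/|x|) := by
    nlinarith [mul_le_mul_of_nonneg_right hxa2 hb.le]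
  nlinarith [h3, hb]

set_option maxHeartbeats 1000000 in
/-- One step of the natural-extension invariant. -/
lemma key_step {α x y : ℝ} (hα1 : (Real.sqrt 5 - 1)/2 ≤ α) (hα2 : α ≤ (Real.sqrt 5 + 1)/2)
    (hx : Irrational x) (hx1 : α - 2 ≤ x) (hx2 : x < α)
    (hy0 : 0 ≤ y) (hyG : y ≤ (1 + Real.sqrt 5)/2)
    (hinv : x < 0 → (3 - Real.sqrt 5)/2 < y → (3 + Real.sqrt 5)/2 ≤ 1/|x|) :
    0 < (dA α x : ℝ) + Real.sign x * y ∧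
    1/((dA α x : ℝ) + Real.sign x * y) ≤ (1 + Real.sqrt 5)/2 ∧
    (phiA α x < 0 → (3 - Real.sqrt 5)/2 < 1/((dA α x : ℝ) + Real.sign x * y) →
      (3 + Real.sqrt 5)/2 ≤ 1/|phiA α x|) := by
  have h5 := sqrt5_sq
  have hs2 := two_lt_sqrt5
  have hs3 := sqrt5_lt_3
  have hx0 : x ≠ 0 := hx.ne_zero
  have hax : 0 < |x| := abs_pos.mpr hx0
  have hd1 : 1 ≤ dA α x := one_le_dA hα2 hx0 hx1 hx2
  have hd1' : (1:ℝ) ≤ (dA α x : ℝ) := by exact_mod_cast hd1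
  have hodd : ∃ k : ℤ, dA α x = 2*k+1 := ⟨_, rfl⟩
  have hcGp : ((3:ℝ) - Real.sqrt 5)/2 * ((3 + Real.sqrt 5)/2) = 1 := by nlinarith
  rcases lt_or_gt_of_ne hx0 with hxneg | hxpos
  · -- x < 0
    rw [Real.sign_of_neg hxneg]
    have habs : |x| = -x := abs_of_neg hxneg
    have hxle : |x| ≤ 2 - α := by rw [habs]; linarith
    rcases le_or_gt y ((3 - Real.sqrt 5)/2) with hyc | hyc
    · -- y ≤ (3-√5)/2, so D = d - y ≥ (√5-1)/2 > 0
      have hD : 0 < (dA α x : ℝ) + (-1) * y := by nlinarith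
      refine ⟨hD, ?_, ?_⟩
      · rw [div_le_iff₀ hD]
        have hDge : (Real.sqrt 5 - 1)/2 ≤ (dA α x : ℝ) + (-1) * y := by linarith
        nlinarith [mul_le_mul_of_nonneg_left hDge
          (by positivity : (0:ℝ) ≤ (1 + Real.sqrt 5)/2)]
      · intro hneg hbig
        have hDlt : (dA α x : ℝ) + (-1) * y < (3 + Real.sqrt 5)/2 := by
          rw [lt_div_iff₀ hD] at hbig
          nlinarith [mul_le_mul_of_nonneg_left hbig.le
            (by positivity : (0:ℝ) ≤ (3 + Real.sqrt 5)/2)]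
        have hdlt : (dA α x : ℝ) < 3 := by nlinarith
        have hd3 : dA α x < 3 := by exact_mod_cast hdlt
        obtain ⟨k, hk⟩ := hodd
        have hde : dA α x = 1 := by omega
        apply d_one_case _ hx0 hde hneg
        linarith
    · -- y > (3-√5)/2 : invariant gives 1/|x| ≥ (3+√5)/2, so d ≥ 3
      have ht := hinv hxneg hyc
      have hd3 : 3 ≤ dA α x := (three_le_dA_iff hx0).mpr (by linarith)
      have hd3' : (3:ℝ) ≤ (dA α x : ℝ) := by exact_mod_cast hd3
      have hD : 0 < (dA α x : ℝ) + (-1) * y := by nlinarith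
      refine ⟨hD, ?_, ?_⟩
      · rw [div_le_iff₀ hD]
        have hDge : (5 - Real.sqrt 5)/2 ≤ (dA α x : ℝ) + (-1) * y := by linarith
        nlinarith [mul_le_mul_of_nonneg_left hDge
          (by positivity : (0:ℝ) ≤ (1 + Real.sqrt 5)/2)]
      · intro hneg hbig
        have hDlt : (dA α x : ℝ) + (-1) * y < (3 + Real.sqrt 5)/2 := by
          rw [lt_div_iff₀ hD] at hbig
          nlinarith [mul_le_mul_of_nonneg_left hbig.le
            (by positivity : (0:ℝ) ≤ (3 + Real.sqrt 5)/2)]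
        have hdlt : (dA α x : ℝ) < 5 := by nlinarith
        have hd5 : dA α x < 5 := by exact_mod_cast hdlt
        obtain ⟨k, hk⟩ := hodd
        have hde : dA α x = 3 := by omega
        have hphi : phiA α x = 1/|x| - 3 := by
          unfold phiA; rw [hde]; norm_num
        have habs2 : |phiA α x| = 3 - 1/|x| := by
          rw [abs_of_neg hneg, hphi]; ring
        have h1 : 0 < 3 - 1/|x| := by rw [hphi] at hneg; linarith
        rw [habs2, le_div_iff₀ h1]
        have hle : 3 - 1/|x| ≤ (3 - Real.sqrt 5)/2 := by linarith
        nlinarith [mul_le_mul_of_nonneg_left hle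
          (by positivity : (0:ℝ) ≤ (3 + Real.sqrt 5)/2)]
  · -- x > 0
    rw [Real.sign_of_pos hxpos]
    have habs : |x| = x := abs_of_pos hxpos
    have hD : 0 < (dA α x : ℝ) + 1 * y := by nlinarith
    refine ⟨hD, ?_, ?_⟩
    · rw [div_le_iff₀ hD]
      have hDge : (1:ℝ) ≤ (dA α x : ℝ) + 1 * y := by linarith
      nlinarith [mul_le_mul_of_nonneg_left hDge
        (by positivity : (0:ℝ) ≤ (1 + Real.sqrt 5)/2)]
    · intro hneg hbig
      have hDlt : (dA α x : ℝ) + 1 * y < (3 + Real.sqrt 5)/2 := by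
        rw [lt_div_iff₀ hD] at hbig
        nlinarith [mul_le_mul_of_nonneg_left hbig.le
          (by positivity : (0:ℝ) ≤ (3 + Real.sqrt 5)/2)]
      have hdlt : (dA α x : ℝ) < 3 := by nlinarith
      have hd3 : dA α x < 3 := by exact_mod_cast hdlt
      obtain ⟨k, hk⟩ := hodd
      have hde : dA α x = 1 := by omega
      apply d_one_case _ hx0 hde hneg
      rw [habs]; linarith

set_option maxHeartbeats 1000000 in
/-- The main induction. -/
lemma main_ind (α x : ℝ) (hα1 : (Real.sqrt 5 - 1)/2 ≤ α) (hα2 : α ≤ (Real.sqrt 5 + 1)/2)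
    (hx : Irrational x) (hx1 : α - 2 ≤ x) (hx2 : x < α) :
    ∀ n : ℕ,
      Irrational ((phiA α)^[n] x) ∧ (α - 2 ≤ (phiA α)^[n] x ∧ (phiA α)^[n] x < α) ∧
      0 < Qc α x (n+1) ∧
      (PhiA α)^[n] (x, 0) = ((phiA α)^[n] x, Qc α x n / Qc α x (n+1)) ∧
      0 ≤ Qc α x n / Qc α x (n+1) ∧ Qc α x n / Qc α x (n+1) ≤ (1 + Real.sqrt 5)/2 ∧
      ((phiA α)^[n] x < 0 → (3 - Real.sqrt 5)/2 < Qc α x n / Qc α x (n+1) →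
        (3 + Real.sqrt 5)/2 ≤ 1/|(phiA α)^[n] x|) := by
  have hs2 := two_lt_sqrt5
  have hs3 := sqrt5_lt_3
  intro n
  induction n with
  | zero =>
    have hQ0 : Qc α x 0 = 0 := rfl
    have hQ1 : Qc α x 1 = 1 := rfl
    refine ⟨hx, ⟨hx1, hx2⟩, by rw [hQ1]; norm_num, ?_, ?_, ?_, ?_⟩
    · simp [hQ0, hQ1]
    · rw [hQ0, hQ1]; norm_num
    · rw [hQ0, hQ1]; norm_num; positivity
    · intro _ h
      rw [hQ0, hQ1] at h
      norm_num at h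
      linarith
  | succ n ih =>
    obtain ⟨hirr, ⟨hm1, hm2⟩, hQpos, hiter, hy0, hyG, hinv⟩ := ih
    set xn := (phiA α)^[n] x with hxn
    set yn := Qc α x n / Qc α x (n+1) with hyn
    obtain ⟨hDpos, hyG', hinv'⟩ := key_step hα1 hα2 hirr hm1 hm2 hy0 hyG hinv
    set D := (dA α xn : ℝ) + Real.sign xn * yn with hDdef
    have hQrec : Qc α x (n+2) = (dA α xn : ℝ) * Qc α x (n+1) + Real.sign xn * Qc α x n := by
      rw [Qc, rec2]
    have hQfac : Qc α x (n+2) = Qc α x (n+1) * D := by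
      rw [hQrec, hDdef, hyn]
      field_simp
    have hQ2pos : 0 < Qc α x (n+2) := by
      rw [hQfac]; exact mul_pos hQpos hDpos
    have hy' : Qc α x (n+1) / Qc α x (n+2) = 1/D := by
      rw [hQfac, ← div_div, div_self hQpos.ne']
    have hsucc : (phiA α)^[n+1] x = phiA α xn := Function.iterate_succ_apply' _ _ _
    have hiter' : (PhiA α)^[n+1] (x, 0) = ((phiA α)^[n+1] x, Qc α x (n+1) / Qc α x (n+2)) := by
      rw [Function.iterate_succ_apply', hiter, hy', hsucc]
      rfl
    have hne : xn ≠ 0 := hirr.ne_zero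
    have hmem := phiA_mem (α := α) hne
    have hy0' : 0 ≤ 1/D := by positivity
    refine ⟨?_, ?_, hQ2pos, hiter', ?_, ?_, ?_⟩
    · rw [hsucc]; exact phiA_irr hirr
    · rw [hsucc]; exact hmem
    · rw [hy']; exact hy0'
    · rw [hy']; exact hyG'
    · rw [hsucc, hy']; exact hinv'

/-- Φ_αⁿ(x,0) = (φ_αⁿ(x), q_{n−1}/q_n); in particular q_n > 0 for n ≥ 1. -/
theorem stmt15 (α x : ℝ)
    (hα : α ∈ Set.Icc ((Real.sqrt 5 - 1)/2) ((Real.sqrt 5 + 1)/2))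
    (hx : Irrational x) (hxI : x ∈ Set.Ico (α-2) α) :
    (∀ n : ℕ, (PhiA α)^[n] (x, 0) = ((phiA α)^[n] x, Qc α x n / Qc α x (n+1))) ∧
    (∀ n : ℕ, 1 ≤ n → 0 < Qc α x (n+1)) := by
  have h := main_ind α x hα.1 hα.2 hx hxI.1 hxI.2
  exact ⟨fun n => (h n).2.2.2.1, fun n _ => (h n).2.2.1⟩
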